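/- For every k ∈ {1,…,6} and every integer n ≥ 1, and for every z ∈ ℂ with |z| ≤ 1 + √3 and z ≠ 1 + √3, all the denominators occurring in the composition φ_{k,n}(z) = R_{θ'_k}(f^n(R_{θ_k}(f(z)))) are nonzero and |φ_{k,n}(z)| ≤ 1 + √3; that is, each Apollonian generator φ_{k,n} maps the closed disk B̄(0, 1 + √3) (minus the pole of f) into itself. -/

import Mathlib

open Complex

/-- The Möbius map `f(z) = ((√3 − 1)z + 1)/(−z + √3 + 1)`. -/
noncomputable def apollonianF (z : ℂ) : ℂ :=
  ((Real.sqrt 3 - 1) * z + 1) / (-z + Real.sqrt 3 + 1)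

/-- The rotation `R_θ(z) = e^{iθ} z`. -/
noncomputable def rot (θ : ℝ) (z : ℂ) : ℂ := Complex.exp (θ * I) * z

/-- The angle `θ_k = (−1)^k · 2π/3`. -/
noncomputable def apollonianTheta (k : ℕ) : ℝ := (-1) ^ k * (2 * Real.pi / 3)

/-- The angle `θ'_k = 2πk/3`. -/
noncomputable def apollonianTheta' (k : ℕ) : ℝ := 2 * Real.pi * k / 3

/-- The Apollonian generator `φ_{k,n} = R_{θ'_k} ∘ f^n ∘ R_{θ_k} ∘ f`. -/
noncomputable def apollonianPhi (k n : ℕ) (z : ℂ) : ℂ :=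
  rot (apollonianTheta' k) (apollonianF^[n] (rot (apollonianTheta k) (apollonianF z)))

set_option maxHeartbeats 1000000 in
lemma keyIneq (s sθ x y P : ℝ) (hs2 : s^2 = 3) (hs0 : 0 ≤ s) (hsθ : sθ^2 = 3/4)
    (hP : s - 1 ≤ P)
    (hcon : (3 - s)/4*(x^2+y^2) + x/2 + sθ*y ≤ 0) :
    ((3 - s)/3)^2 ≤ (x-P)^2 + y^2 := by
  have hs1 : 1 < s := by nlinarith
  have hslt : s < 2 := by nlinarith
  set R : ℝ := (3+s)/3 with hR
  have hRpos : 0 < R := by rw [hR]; linarith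
  have h3 : (x^2+y^2) + R*x + 2*sθ*R*y ≤ 0 := by
    have h2 := mul_le_mul_of_nonneg_left hcon (show (0:ℝ) ≤ 2*R by linarith)
    have e : 2*R*((3-s)/4*(x^2+y^2) + x/2 + sθ*y)
        = (x^2+y^2) + R*x + 2*sθ*R*y - (s^2-3)/6*(x^2+y^2) := by rw [hR]; ring
    rw [e, hs2] at h2
    linarith [h2]
  have hdisk : (x + R/2)^2 + (y + sθ*R)^2 ≤ R^2 := by
    have e2 : (x + R/2)^2 + (y + sθ*R)^2 - R^2
        = (x^2+y^2) + R*x + 2*sθ*R*y + (sθ^2 - 3/4)*R^2 := by ring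
    rw [hsθ] at e2
    linarith [h3, e2]
  have hTarg : (0:ℝ) ≤ (x+R/2)^2 + (y+sθ*R)^2 := by positivity
  set T := Real.sqrt ((x+R/2)^2 + (y+sθ*R)^2) with hT
  have hT0 : 0 ≤ T := Real.sqrt_nonneg _
  have hT2 : T^2 = (x+R/2)^2 + (y+sθ*R)^2 := by rw [hT]; exact Real.sq_sqrt hTarg
  have hTR : T ≤ R := by
    rw [hT]
    calc Real.sqrt ((x+R/2)^2 + (y+sθ*R)^2) ≤ Real.sqrt (R^2) := Real.sqrt_le_sqrt hdisk
      _ = R := Real.sqrt_sq hRpos.le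
  set D := Real.sqrt ((P+R/2)^2 + (sθ*R)^2) with hD
  have hD0 : 0 ≤ D := Real.sqrt_nonneg _
  have hD2 : D^2 = (P+R/2)^2 + (sθ*R)^2 := by rw [hD]; exact Real.sq_sqrt (by positivity)
  have hD4 : 2 ≤ D := by
    have e3 : (sθ*R)^2 = 3/4*R^2 := by rw [mul_pow, hsθ]
    have hM1 : (0:ℝ) ≤ P - (s-1) := by linarith
    have hM2 : (0:ℝ) ≤ P + (s-1) + R := by linarith
    have hM : 0 ≤ (P - (s-1)) * (P + (s-1) + R) := mul_nonneg hM1 hM2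
    have h6 : (s-1)^2 + (s-1)*R ≤ P^2 + P*R := by nlinarith [hM]
    have h7 : (s-1)^2 + (s-1)*R + R^2 = 16/3 - 2*s/3 + 13/9*(s^2-3) := by rw [hR]; ring
    rw [hs2] at h7
    have h5 : 4 ≤ (P+R/2)^2 + (sθ*R)^2 := by rw [e3]; nlinarith [h6, h7, hslt]
    calc (2:ℝ) = Real.sqrt 4 := by
          rw [show (4:ℝ) = 2^2 by norm_num, Real.sqrt_sq (by norm_num : (0:ℝ) ≤ 2)]
      _ ≤ D := Real.sqrt_le_sqrt h5
  set A := x + R/2 with hA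
  set B := y + sθ*R with hB
  set C1 := P + R/2 with hC1
  set C2 := sθ*R with hC2
  have hip : A*C1 + B*C2 ≤ T*D := by
    have hCS : (A*C1+B*C2)^2 ≤ (T*D)^2 := by
      have e4 : (T*D)^2 = (A^2+B^2)*(C1^2+C2^2) := by rw [mul_pow, hT2, hD2]
      rw [e4]; nlinarith [sq_nonneg (A*C2 - B*C1)]
    calc A*C1+B*C2 ≤ |A*C1+B*C2| := le_abs_self _
      _ = Real.sqrt ((A*C1+B*C2)^2) := (Real.sqrt_sq_eq_abs _).symm
      _ ≤ Real.sqrt ((T*D)^2) := Real.sqrt_le_sqrt hCS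
      _ = T*D := Real.sqrt_sq (mul_nonneg hT0 hD0)
  have hgoal : (x-P)^2 + y^2 = T^2 - 2*(A*C1+B*C2) + D^2 := by rw [hT2, hD2]; ring
  rw [hgoal]
  have h1 : (3-s)/3 = 2 - R := by rw [hR]; ring
  have h2R : 0 ≤ 2 - R := by rw [hR]; linarith
  have h3' : 2 - R ≤ D - T := by linarith
  have h4 : (2-R)^2 ≤ (D-T)^2 := by nlinarith [h2R, h3']
  rw [h1]
  nlinarith [h4, hip]


lemma stepF (d : ℂ) (hd0 : d ≠ 0) (hd1 : (Real.sqrt 3 : ℂ) * d - 1 ≠ 0) :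
    apollonianF (1 + d⁻¹) = 1 + (d - ((Real.sqrt 3 : ℂ))⁻¹)⁻¹ := by
  have hs0 : (0:ℝ) < Real.sqrt 3 := Real.sqrt_pos.2 (by norm_num)
  have hS : ((Real.sqrt 3 : ℝ) : ℂ) ≠ 0 := Complex.ofReal_ne_zero.2 hs0.ne'
  have hd2 : d - ((Real.sqrt 3 : ℂ))⁻¹ ≠ 0 := by
    intro h
    rw [sub_eq_zero] at h
    apply hd1
    rw [h, mul_inv_cancel₀ hS, sub_self]
  have e1 : -(1 + d⁻¹) + ((Real.sqrt 3:ℝ):ℂ) + 1 = (((Real.sqrt 3:ℝ):ℂ)*d - 1)/d := by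
    field_simp; ring
  have e2 : (((Real.sqrt 3:ℝ):ℂ) - 1)*(1 + d⁻¹) + 1
      = (((Real.sqrt 3:ℝ):ℂ)*d + ((Real.sqrt 3:ℝ):ℂ) - 1)/d := by
    field_simp; ring
  have e3 : d - (((Real.sqrt 3:ℝ):ℂ))⁻¹ = (((Real.sqrt 3:ℝ):ℂ)*d - 1)/((Real.sqrt 3:ℝ):ℂ) := by
    field_simp
  simp only [apollonianF]
  rw [e1, e2, div_div_div_cancel_right₀ hd0, e3, inv_div]
  rw [add_div' _ _ _ hd1, div_eq_div_iff hd1 hd1]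
  ring

lemma iterF (u : ℂ) (hu0 : u ≠ 0) (hu : ∀ t : ℝ, 0 < t → u ≠ (t : ℂ)) :
    ∀ j : ℕ, apollonianF^[j] (1 + u⁻¹) = 1 + (u - (j : ℂ) / (Real.sqrt 3 : ℂ))⁻¹ := by
  have hs0 : (0:ℝ) < Real.sqrt 3 := Real.sqrt_pos.2 (by norm_num)
  have hS : ((Real.sqrt 3 : ℝ) : ℂ) ≠ 0 := Complex.ofReal_ne_zero.2 hs0.ne'
  intro j
  induction j with
  | zero => simp
  | succ j ih =>
    rw [Function.iterate_succ_apply', ih]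
    have hd0 : u - (j:ℂ)/(Real.sqrt 3 : ℂ) ≠ 0 := by
      rcases Nat.eq_zero_or_pos j with rfl | hjpos
      · simpa using hu0
      · intro h
        apply hu ((j:ℝ)/Real.sqrt 3) (by positivity)
        have : u = (j:ℂ)/(Real.sqrt 3:ℂ) := by linear_combination h
        rw [this]; push_cast; ring
    have hd1 : (Real.sqrt 3 : ℂ) * (u - (j:ℂ)/(Real.sqrt 3 : ℂ)) - 1 ≠ 0 := by
      intro h
      apply hu (((j:ℝ)+1)/Real.sqrt 3) (by positivity)
      have : u = ((j:ℂ)+1)/(Real.sqrt 3:ℂ) := by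
        field_simp at h ⊢
        linear_combination h
      rw [this]; push_cast; ring
    rw [stepF _ hd0 hd1]
    congr 1
    congr 1
    push_cast
    field_simp
    ring



lemma cosTheta (k : ℕ) : Real.cos (apollonianTheta k) = -(1/2) := by
  have h : Real.cos (2*Real.pi/3) = -(1/2) := by
    rw [show 2*Real.pi/3 = Real.pi - Real.pi/3 by ring, Real.cos_pi_sub, Real.cos_pi_div_three]
  rcases Nat.even_or_odd k with hk | hk
  · rw [apollonianTheta, hk.neg_one_pow, one_mul, h]
  · rw [apollonianTheta, hk.neg_one_pow, neg_one_mul, Real.cos_neg, h]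

lemma sinThetaSq (k : ℕ) : Real.sin (apollonianTheta k)^2 = 3/4 := by
  have h := Real.sin_sq_add_cos_sq (apollonianTheta k)
  rw [cosTheta k] at h
  nlinarith [h]

lemma reF_bound (z : ℂ) (hz : ‖z‖ ≤ 1 + Real.sqrt 3)
    (hb : (-z + (Real.sqrt 3:ℂ) + 1) ≠ 0) :
    -((Real.sqrt 3 - 1)/4) ≤ (apollonianF z).re := by
  have hs2 : Real.sqrt 3 ^ 2 = 3 := Real.sq_sqrt (by norm_num)
  have hs0 : (0:ℝ) ≤ Real.sqrt 3 := Real.sqrt_nonneg 3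
  have hs1 : 1 < Real.sqrt 3 := by nlinarith
  have hz2 : z.re^2 + z.im^2 ≤ (1+Real.sqrt 3)^2 := by
    have h1 : ‖z‖ ^ 2 ≤ (1+Real.sqrt 3)^2 :=
      pow_le_pow_left₀ (norm_nonneg z) hz 2
    rw [Complex.sq_norm, Complex.normSq_apply] at h1
    nlinarith [h1]
  have hbpos : 0 < Complex.normSq (-z + (Real.sqrt 3:ℂ) + 1) := Complex.normSq_pos.2 hb
  simp only [apollonianF, Complex.div_re]
  rw [← add_div, le_div_iff₀ hbpos]
  simp only [Complex.normSq_apply, Complex.add_re, Complex.add_im, Complex.mul_re, Complex.mul_im,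
    Complex.neg_re, Complex.neg_im, Complex.sub_re, Complex.sub_im, Complex.one_re, Complex.one_im,
    Complex.ofReal_re, Complex.ofReal_im]
  ring_nf
  have hs3 : Real.sqrt 3 ^ 3 = 3 * Real.sqrt 3 := by
    rw [pow_succ, hs2]
  have hs2X : Real.sqrt 3 ^ 2 * z.re = 3 * z.re := by rw [hs2]
  nlinarith [hz2, hs2, hs3, hs2X, mul_nonneg (show (0:ℝ) ≤ Real.sqrt 3 - 1 by linarith)
    (show (0:ℝ) ≤ (1+Real.sqrt 3)^2 - (z.re^2+z.im^2) by linarith)]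







set_option maxHeartbeats 1600000 in
/-- For `k ∈ {1,…,6}`, `n ≥ 1` and `|z| ≤ 1 + √3`, `z ≠ 1 + √3`: no intermediate point of the
composition hits the pole `1 + √3` of `f` (so all denominators are nonzero), and
`|φ_{k,n}(z)| ≤ 1 + √3`. -/
theorem apollonianPhi_mapsTo (k n : ℕ) (hk1 : 1 ≤ k) (hk6 : k ≤ 6) (hn : 1 ≤ n)
    (z : ℂ) (hz : ‖z‖ ≤ 1 + Real.sqrt 3) (hz' : z ≠ (1 + Real.sqrt 3 : ℝ)) :
    (∀ j < n, apollonianF^[j] (rot (apollonianTheta k) (apollonianF z)) ≠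
      ((1 + Real.sqrt 3 : ℝ) : ℂ)) ∧
    ‖apollonianPhi k n z‖ ≤ 1 + Real.sqrt 3 := by
  have hs2 : Real.sqrt 3 ^ 2 = 3 := Real.sq_sqrt (by norm_num)
  have hs0 : (0:ℝ) < Real.sqrt 3 := Real.sqrt_pos.2 (by norm_num)
  have hs1 : 1 < Real.sqrt 3 := by nlinarith
  have hslt : Real.sqrt 3 < 2 := by nlinarith
  -- the denominator of f at z is nonzero
  have hb : (-z + (Real.sqrt 3:ℂ) + 1) ≠ 0 := by
    intro h
    apply hz'
    push_cast
    linear_combination -h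
  have hwre := reF_bound z hz hb
  set θ := apollonianTheta k with hθdef
  have hcθ : Real.cos θ = -(1/2) := cosTheta k
  have hsθ2 : Real.sin θ ^ 2 = 3/4 := sinThetaSq k
  obtain ⟨w, hwdef⟩ : ∃ w, w = apollonianF z := ⟨_, rfl⟩
  rw [← hwdef] at hwre
  obtain ⟨v, hvdef⟩ : ∃ v, v = rot θ w := ⟨_, rfl⟩
  have hvre : v.re = Real.cos θ * w.re - Real.sin θ * w.im := by
    rw [hvdef, rot]
    simp [Complex.mul_re, Complex.exp_ofReal_mul_I_re, Complex.exp_ofReal_mul_I_im]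
  have hvim : v.im = Real.sin θ * w.re + Real.cos θ * w.im := by
    rw [hvdef, rot]
    simp [Complex.mul_im, Complex.exp_ofReal_mul_I_re, Complex.exp_ofReal_mul_I_im]
    ring
  have hvw : Real.cos θ * v.re + Real.sin θ * v.im = w.re := by
    rw [hvre, hvim]
    linear_combination w.re * Real.sin_sq_add_cos_sq θ
  have hv1 : v ≠ 1 := by
    intro h
    rw [h] at hvw
    simp [hcθ] at hvw
    linarith [hwre, hvw.symm.le, hvw.symm.ge]
  have hv1' : v - 1 ≠ 0 := sub_ne_zero.2 hv1
  obtain ⟨u, hudef⟩ : ∃ u, u = (v - 1)⁻¹ := ⟨_, rfl⟩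
  have hu0 : u ≠ 0 := by rw [hudef]; exact inv_ne_zero hv1'
  have hveq : v = 1 + u⁻¹ := by rw [hudef, inv_inv]; ring
  have hn2 : 0 < u.re^2 + u.im^2 := by
    have h := Complex.normSq_pos.2 hu0
    rw [Complex.normSq_apply] at h
    nlinarith [h]
  -- the master constraint on u
  have hcon : (3 - Real.sqrt 3)/4*(u.re^2+u.im^2) + u.re/2 + Real.sin θ*u.im ≤ 0 := by
    have h1 : -((Real.sqrt 3 - 1)/4) ≤ Real.cos θ * v.re + Real.sin θ * v.im := by
      rw [hvw]; exact hwre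
    rw [hveq, hcθ] at h1
    simp only [Complex.add_re, Complex.add_im, Complex.one_re, Complex.one_im, Complex.inv_re,
      Complex.inv_im, Complex.normSq_apply] at h1
    have h2 := mul_le_mul_of_nonneg_right h1 hn2.le
    have e : (-(1/2) * (1 + u.re / (u.re * u.re + u.im * u.im)) +
        Real.sin θ * (0 + -u.im / (u.re * u.re + u.im * u.im))) * (u.re^2 + u.im^2)
        = -(1/2)*(u.re^2+u.im^2) - u.re/2 - Real.sin θ*u.im := by
      have hnn : u.re * u.re + u.im * u.im ≠ 0 := by nlinarith [hn2]
      field_simp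
      ring
    rw [e] at h2
    nlinarith [h2]
  -- u avoids all positive reals
  have hupos : ∀ t : ℝ, 0 < t → u ≠ (t:ℂ) := by
    intro t ht h
    have hx : u.re = t := by rw [h]; simp
    have hy : u.im = 0 := by rw [h]; simp
    rw [hx, hy] at hcon
    nlinarith [hcon, ht, mul_pos ht ht, hslt]
  have hiter : ∀ j : ℕ, apollonianF^[j] v = 1 + (u - (j:ℂ)/(Real.sqrt 3 : ℂ))⁻¹ := by
    intro j
    rw [hveq]
    exact iterF u hu0 hupos j
  constructor
  · -- no iterate hits the pole
    intro j hj hcontra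
    rw [← hwdef, ← hvdef, hiter j] at hcontra
    have h2 : (u - (j:ℂ)/(Real.sqrt 3:ℂ))⁻¹ = ((Real.sqrt 3:ℝ):ℂ) := by
      have hc : ((1+Real.sqrt 3:ℝ):ℂ) = 1 + ((Real.sqrt 3:ℝ):ℂ) := by push_cast; ring
      rw [hc] at hcontra
      linear_combination hcontra
    have h3 : u - (j:ℂ)/(Real.sqrt 3:ℂ) = (((Real.sqrt 3:ℝ):ℂ))⁻¹ := by
      rw [← inv_inv (u - (j:ℂ)/(Real.sqrt 3:ℂ)), h2]
    apply hupos (((j:ℝ)+1)/Real.sqrt 3) (by positivity)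
    have hS : ((Real.sqrt 3 : ℝ) : ℂ) ≠ 0 := Complex.ofReal_ne_zero.2 hs0.ne'
    have : u = (j:ℂ)/(Real.sqrt 3:ℂ) + (((Real.sqrt 3:ℝ):ℂ))⁻¹ := by linear_combination h3
    rw [this]
    push_cast
    field_simp
  · -- the modulus bound
    have hnpos : (0:ℝ) < n := by exact_mod_cast hn
    simp only [apollonianPhi]
    rw [← hwdef, ← hvdef, hiter n, rot, norm_mul, Complex.norm_exp_ofReal_mul_I, one_mul]
    have hcastd : (n:ℂ)/(Real.sqrt 3:ℂ) = (((n:ℝ)/Real.sqrt 3 : ℝ):ℂ) := by push_cast; ring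
    obtain ⟨d, hddef⟩ : ∃ d, d = u - (n:ℂ)/(Real.sqrt 3:ℂ) := ⟨_, rfl⟩
    rw [← hddef]
    have hdne : d ≠ 0 := by
      rw [hddef, hcastd]
      intro h
      apply hupos ((n:ℝ)/Real.sqrt 3) (by positivity)
      linear_combination h
    have hdre : d.re = u.re - (n:ℝ)/Real.sqrt 3 := by
      rw [hddef, hcastd]; simp
    have hdim : d.im = u.im := by
      rw [hddef, hcastd]; simp
    -- apply the key inequality with P = n/√3 + (2√3−3)/3
    have hPle : Real.sqrt 3 - 1 ≤ (n:ℝ)/Real.sqrt 3 + (2*Real.sqrt 3-3)/3 := by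
      have h1 : (1:ℝ)/Real.sqrt 3 ≤ (n:ℝ)/Real.sqrt 3 := by
        gcongr
        exact_mod_cast hn
      have h2 : (1:ℝ)/Real.sqrt 3 = Real.sqrt 3/3 := by
        rw [div_eq_div_iff hs0.ne' (by norm_num : (3:ℝ) ≠ 0)]
        linear_combination -hs2
      rw [h2] at h1
      linarith
    have hK := keyIneq (Real.sqrt 3) (Real.sin θ) u.re u.im
      ((n:ℝ)/Real.sqrt 3 + (2*Real.sqrt 3-3)/3) hs2 hs0.le hsθ2 hPle hcon
    -- convert to the d-coordinates
    have hK' : ((3-Real.sqrt 3)/3)^2 ≤ (d.re - (2*Real.sqrt 3-3)/3)^2 + d.im^2 := by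
      rw [hdre, hdim]
      calc ((3-Real.sqrt 3)/3)^2 ≤ (u.re - ((n:ℝ)/Real.sqrt 3 + (2*Real.sqrt 3-3)/3))^2 + u.im^2 := hK
        _ = (u.re - (n:ℝ)/Real.sqrt 3 - (2*Real.sqrt 3-3)/3)^2 + u.im^2 := by ring
    have hident : (3+2*Real.sqrt 3)*((d.re-(2*Real.sqrt 3-3)/3)^2 + d.im^2 - ((3-Real.sqrt 3)/3)^2)
        = (3+2*Real.sqrt 3)*(d.re^2+d.im^2) - (2*d.re+1)
          + (Real.sqrt 3^2-3)*((2*Real.sqrt 3-1-8*d.re)/3) := by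
      ring
    rw [hs2] at hident
    have hprod : 0 ≤ (3+2*Real.sqrt 3)*((d.re-(2*Real.sqrt 3-3)/3)^2 + d.im^2 - ((3-Real.sqrt 3)/3)^2) := by
      apply mul_nonneg (by linarith)
      linarith [hK']
    have hkey3 : 2*d.re + 1 ≤ (3+2*Real.sqrt 3)*(d.re^2+d.im^2) := by
      nlinarith [hprod, hident]
    -- now the modulus computation
    have e1 : (1:ℂ) + d⁻¹ = (d+1)/d := by
      field_simp
    rw [e1, norm_div]
    rw [div_le_iff₀ (norm_pos_iff.2 hdne)]
    have hsq1 : ‖d+1‖^2 = Complex.normSq (d+1) := Complex.sq_norm _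
    have hsq2 : ((1+Real.sqrt 3)*‖d‖)^2 = (4+2*Real.sqrt 3)*Complex.normSq d := by
      rw [mul_pow, Complex.sq_norm]
      linear_combination Complex.normSq d * hs2
    have hns1 : Complex.normSq (d+1) = (d.re+1)^2 + d.im^2 := by
      rw [Complex.normSq_apply]; simp; ring
    have hns2 : Complex.normSq d = d.re^2 + d.im^2 := by
      rw [Complex.normSq_apply]; ring
    have hnormle : Complex.normSq (d+1) ≤ (4+2*Real.sqrt 3)*Complex.normSq d := by
      rw [hns1, hns2]
      nlinarith [hkey3]
    have hC0 : 0 ≤ (1+Real.sqrt 3)*‖d‖ := by positivity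
    calc ‖d+1‖ = Real.sqrt (‖d+1‖^2) :=
          (Real.sqrt_sq (norm_nonneg _)).symm
      _ ≤ Real.sqrt (((1+Real.sqrt 3)*‖d‖)^2) := by
          apply Real.sqrt_le_sqrt
          rw [hsq1, hsq2]
          exact hnormle
      _ = (1+Real.sqrt 3)*‖d‖ := Real.sqrt_sq hC0
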